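/- arXiv:2407.09031 — 3 statements merged into one kernel-verified Lean document; each statement's English description precedes it below -/
import Mathlib

section
/- Let γ ∈ (-3,0) and k₀ > 3. There is a constant C such that for every measurable g : ℝ³ → ℝ with |g(v)| ≤ ⟨v⟩^{-k₀} for a.e. v, one has |∫_{ℝ³} |v - v_*|^γ g(v_*) dv_*| ≤ C ⟨v⟩^γ for all v ∈ ℝ³, where ⟨v⟩ = (1+|v|²)^{1/2}. -/
open MeasureTheory Set

noncomputable section

open Metric Real Filter
open scoped ENNReal

local notation "E3" => EuclideanSpace ℝ (Fin 3)

lemma aux_integrableOn (γ : ℝ) (hγ₁ : -3 < γ) (hγ₂ : γ < 0) {R : ℝ} (hR : 0 < R) :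
    IntegrableOn (fun x : E3 => ‖x‖ ^ γ) (ball 0 R) := by
  have hmeas : Measurable fun x : E3 => ‖x‖ ^ γ := by fun_prop
  constructor
  · exact hmeas.aestronglyMeasurable
  · have h0 : 0 ≤ fun x : E3 => ‖x‖ ^ γ := fun x => rpow_nonneg (norm_nonneg x) γ
    rw [HasFiniteIntegral, lintegral_enorm_of_nonneg h0,
      lintegral_eq_lintegral_meas_le _ (Eventually.of_forall h0) hmeas.aemeasurable]
    set μ' := (volume : Measure E3).restrict (ball 0 R)
    calc ∫⁻ t in Ioi 0, μ' {a : E3 | t ≤ ‖a‖ ^ γ}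
        ≤ ∫⁻ t in Ioc 0 1 ∪ Ioi 1, μ' {a : E3 | t ≤ ‖a‖ ^ γ} :=
          lintegral_mono_set Ioi_subset_Ioc_union_Ioi
      _ ≤ (∫⁻ t in Ioc 0 1, μ' {a : E3 | t ≤ ‖a‖ ^ γ})
            + ∫⁻ t in Ioi 1, μ' {a : E3 | t ≤ ‖a‖ ^ γ} := lintegral_union_le _ _ _
      _ < ∞ := by
        refine ENNReal.add_lt_top.2 ⟨?_, ?_⟩
        · calc (∫⁻ t in Ioc 0 1, μ' {a : E3 | t ≤ ‖a‖ ^ γ})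
              ≤ ∫⁻ _ in Ioc (0:ℝ) 1, volume (ball (0:E3) R) := by
                refine setLIntegral_mono' measurableSet_Ioc fun t _ => ?_
                calc μ' {a : E3 | t ≤ ‖a‖ ^ γ} ≤ μ' univ := measure_mono (subset_univ _)
                  _ = volume (ball (0:E3) R) := by simp [μ']
            _ < ∞ := by
                rw [setLIntegral_const]
                exact ENNReal.mul_lt_top measure_ball_lt_top (by simp)
        · have hsub : ∀ t : ℝ, 1 < t → μ' {a : E3 | t ≤ ‖a‖ ^ γ}
              ≤ ENNReal.ofReal (t ^ (γ⁻¹ * 3)) * volume (ball (0:E3) 1) := by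
            intro t ht
            have ht0 : (0:ℝ) < t := lt_trans one_pos ht
            have hss : {a : E3 | t ≤ ‖a‖ ^ γ} ⊆ closedBall 0 (t ^ γ⁻¹) := by
              intro x hx
              simp only [mem_setOf_eq] at hx
              rcases eq_or_ne x 0 with rfl | hx0
              · exfalso
                rw [norm_zero, zero_rpow hγ₂.ne] at hx
                linarith
              · have hnx : (0:ℝ) < ‖x‖ := norm_pos_iff.2 hx0
                rw [mem_closedBall_zero_iff]
                exact (Real.le_rpow_inv_iff_of_neg hnx ht0 hγ₂).2 hx
            calc μ' {a : E3 | t ≤ ‖a‖ ^ γ} ≤ volume {a : E3 | t ≤ ‖a‖ ^ γ} :=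
                Measure.restrict_le_self _
              _ ≤ volume (closedBall (0:E3) (t ^ γ⁻¹)) := measure_mono hss
              _ = ENNReal.ofReal ((t ^ γ⁻¹) ^ Module.finrank ℝ E3) * volume (ball (0:E3) 1) :=
                Measure.addHaar_closedBall _ _ (rpow_nonneg ht0.le _)
              _ = ENNReal.ofReal (t ^ (γ⁻¹ * 3)) * volume (ball (0:E3) 1) := by
                rw [finrank_euclideanSpace_fin, ← rpow_natCast (t ^ γ⁻¹) 3,
                  ← rpow_mul ht0.le]
                norm_num
          calc (∫⁻ t in Ioi 1, μ' {a : E3 | t ≤ ‖a‖ ^ γ})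
              ≤ ∫⁻ t in Ioi (1:ℝ), ENNReal.ofReal (t ^ (γ⁻¹ * 3)) * volume (ball (0:E3) 1) :=
                setLIntegral_mono' measurableSet_Ioi fun t ht => hsub t ht
            _ = (∫⁻ t in Ioi (1:ℝ), ENNReal.ofReal (t ^ (γ⁻¹ * 3))) * volume (ball (0:E3) 1) := by
                rw [lintegral_mul_const' _ _ measure_ball_lt_top.ne]
            _ < ∞ := by
                refine ENNReal.mul_lt_top ?_ measure_ball_lt_top
                refine IntegrableOn.setLIntegral_lt_top ?_
                refine integrableOn_Ioi_rpow_of_lt ?_ one_pos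
                rw [inv_mul_eq_div, div_lt_iff_of_neg hγ₂]
                linarith

lemma aux_integral_eq (γ : ℝ) (hγ₁ : -3 < γ) (hγ₂ : γ < 0) {R : ℝ} (hR : 0 < R) :
    ∫ x in ball (0:E3) R, ‖x‖ ^ γ
      = 3 * (volume (ball (0:E3) 1)).toReal * (R ^ (3+γ) / (3+γ)) := by
  set κ := (volume (ball (0:E3) 1)).toReal with hκ
  set f : ℝ → ℝ := (Ioo (0:ℝ) R).indicator fun y => y ^ γ with hf
  have key : ∀ x : E3, (ball (0:E3) R).indicator (fun x => ‖x‖ ^ γ) x = f ‖x‖ := by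
    intro x
    rcases eq_or_ne x 0 with rfl | hx0
    · simp [hf, indicator, mem_ball_zero_iff, hR, zero_rpow hγ₂.ne]
    · have hnx : (0:ℝ) < ‖x‖ := norm_pos_iff.2 hx0
      by_cases h1 : ‖x‖ < R
      · simp [hf, indicator, mem_ball_zero_iff, h1, mem_Ioo, hnx]
      · simp [hf, indicator, mem_ball_zero_iff, h1, mem_Ioo, hnx]
  rw [← integral_indicator measurableSet_ball]
  calc (∫ x : E3, (ball (0:E3) R).indicator (fun x => ‖x‖ ^ γ) x)
      = ∫ x : E3, f ‖x‖ := by exact integral_congr_ae (Eventually.of_forall key)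
    _ = Module.finrank ℝ E3 • κ • ∫ y in Ioi (0:ℝ), y ^ (Module.finrank ℝ E3 - 1) • f y :=
        integral_fun_norm_addHaar volume f
    _ = 3 * κ * (R ^ (3+γ) / (3+γ)) := by
        rw [finrank_euclideanSpace_fin]
        have step1 : ∀ y : ℝ, y ^ (3 - 1) • f y
            = (Ioo (0:ℝ) R).indicator (fun y => y ^ (2+γ)) y := by
          intro y
          by_cases h : y ∈ Ioo (0:ℝ) R
          · have hy0 : (0:ℝ) < y := h.1
            simp only [hf, indicator_of_mem h, smul_eq_mul]
            rw [← rpow_natCast y (3-1), ← rpow_add hy0]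
            norm_num
          · simp [hf, indicator_of_notMem h]
        simp only [step1]
        rw [setIntegral_indicator measurableSet_Ioo,
          inter_eq_self_of_subset_right Ioo_subset_Ioi_self,
          ← integral_Ioc_eq_integral_Ioo, ← intervalIntegral.integral_of_le hR.le,
          integral_rpow (Or.inl (by linarith : (-1:ℝ) < 2+γ))]
        rw [show (2:ℝ) + γ + 1 = 3 + γ by ring, zero_rpow (by linarith : (3:ℝ)+γ ≠ 0)]
        simp [smul_eq_mul]
        ring

lemma aux_arith (d s n : ℝ) (hd : 0 ≤ d) (hs : 0 ≤ s) (hn : 0 ≤ n)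
    (htri : n ≤ d + s) (hd2 : d ^ 2 ≤ (1 + n ^ 2) / 4) :
    (1 + n ^ 2) / 4 ≤ 1 + s ^ 2 := by
  nlinarith [sq_nonneg (d - s), sq_nonneg (d + s), mul_nonneg hd hs]

set_option maxHeartbeats 1000000 in
/-- For `γ ∈ (-3,0)` and `k₀ > 3`, there is a constant `C` such that for every
measurable `g` with `|g(v)| ≤ ⟨v⟩^{-k₀}` a.e., one has
`|∫ |v - v_*|^γ g(v_*) dv_*| ≤ C ⟨v⟩^γ` for all `v`, where `⟨v⟩ = (1+|v|²)^{1/2}`. -/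
theorem soft_potential_convolution_bound
    (γ : ℝ) (hγ₁ : -3 < γ) (hγ₂ : γ < 0)
    (k₀ : ℝ) (hk₀ : 3 < k₀) :
    ∃ C : ℝ, 0 < C ∧
      ∀ g : EuclideanSpace ℝ (Fin 3) → ℝ, Measurable g →
        (∀ᵐ v : EuclideanSpace ℝ (Fin 3), |g v| ≤ (1 + ‖v‖ ^ 2) ^ (-k₀ / 2)) →
        ∀ v : EuclideanSpace ℝ (Fin 3),
          |∫ w : EuclideanSpace ℝ (Fin 3), ‖v - w‖ ^ γ * g w|
            ≤ C * (1 + ‖v‖ ^ 2) ^ (γ / 2) := by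
  have h3γ : (0:ℝ) < 3 + γ := by linarith
  set κ := (volume (ball (0:E3) 1)).toReal with hκ
  have hκ0 : 0 ≤ κ := ENNReal.toReal_nonneg
  set I₂ := ∫ w : E3, (1 + ‖w‖ ^ 2) ^ (-k₀ / 2) with hI₂def
  have hI₂0 : 0 ≤ I₂ := integral_nonneg fun w => rpow_nonneg (by positivity) _
  have hk' : (Module.finrank ℝ E3 : ℝ) < k₀ := by
    rw [finrank_euclideanSpace_fin]; exact_mod_cast hk₀
  have hint₂ : Integrable (fun w : E3 => (1 + ‖w‖ ^ 2) ^ (-k₀ / 2)) :=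
    integrable_rpow_neg_one_add_norm_sq hk'
  set C₁ : ℝ := (4:ℝ) ^ (k₀/2) * (2:ℝ) ^ (-(3+γ)) * (3 * κ / (3+γ)) with hC₁
  have hC₁0 : 0 ≤ C₁ := by positivity
  refine ⟨C₁ + (2:ℝ) ^ (-γ) * I₂ + 1, by positivity, ?_⟩
  intro g hg hgb v
  set A : ℝ := 1 + ‖v‖ ^ 2 with hA
  have hA1 : 1 ≤ A := le_add_of_nonneg_right (by positivity)
  have hA0 : (0:ℝ) < A := by positivity
  set R : ℝ := A ^ ((1:ℝ)/2) / 2 with hRdef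
  have hR : 0 < R := by positivity
  have hA2 : (A ^ ((1:ℝ)/2)) ^ 2 = A := by
    rw [← rpow_natCast (A ^ ((1:ℝ)/2)) 2, ← rpow_mul hA0.le]
    norm_num
  set cA : ℝ := (4:ℝ) ^ (k₀/2) * A ^ (-k₀/2) with hcA
  have hcA0 : 0 ≤ cA := by positivity
  set F : E3 → ℝ := (ball (0:E3) R).indicator (fun x => cA * ‖x‖ ^ γ) with hF
  set h₁ : E3 → ℝ := fun w => F (v - w) with hh₁
  set h₂ : E3 → ℝ := fun w => ((2:ℝ) ^ (-γ) * A ^ (γ/2)) * (1 + ‖w‖ ^ 2) ^ (-k₀ / 2) with hh₂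
  have hFint : Integrable F :=
    (integrable_indicator_iff measurableSet_ball).2
      ((aux_integrableOn γ hγ₁ hγ₂ hR).const_mul cA)
  have hI1 : Integrable h₁ := hFint.comp_sub_left v
  have hI2 : Integrable h₂ := hint₂.const_mul _
  -- key pointwise bound
  have hae : ∀ᵐ w : E3, ‖‖v - w‖ ^ γ * g w‖ ≤ h₁ w + h₂ w := by
    filter_upwards [hgb] with w hw
    have hN0 : (0:ℝ) ≤ ‖v - w‖ := norm_nonneg _
    have hNγ : (0:ℝ) ≤ ‖v - w‖ ^ γ := rpow_nonneg hN0 _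
    have hb : ‖‖v - w‖ ^ γ * g w‖ ≤ ‖v - w‖ ^ γ * (1 + ‖w‖ ^ 2) ^ (-k₀ / 2) := by
      rw [norm_mul, Real.norm_eq_abs, Real.norm_eq_abs, abs_of_nonneg hNγ]
      exact mul_le_mul_of_nonneg_left hw hNγ
    have hw0 : (0:ℝ) < 1 + ‖w‖ ^ 2 := by positivity
    by_cases hmem : v - w ∈ ball (0:E3) R
    · have hd : ‖v - w‖ < R := by rwa [mem_ball_zero_iff] at hmem
      have hd2 : ‖v - w‖ ^ 2 ≤ A / 4 := by
        have h2 : ‖v - w‖ ^ 2 < R ^ 2 := by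
          exact pow_lt_pow_left₀ hd hN0 two_ne_zero
        rw [hRdef, div_pow, hA2] at h2
        have : ((2:ℝ))^2 = 4 := by norm_num
        rw [this] at h2
        linarith
      have htri : ‖v‖ ≤ ‖v - w‖ + ‖w‖ := by
        have := norm_add_le (v - w) w
        rwa [sub_add_cancel] at this
      have hw4 : A / 4 ≤ 1 + ‖w‖ ^ 2 := by
        rw [hA] at hd2 ⊢
        exact aux_arith _ _ _ hN0 (norm_nonneg w) (norm_nonneg v) htri hd2
      have hwb : (1 + ‖w‖ ^ 2) ^ (-k₀ / 2) ≤ cA := by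
        have h1 : (1 + ‖w‖ ^ 2) ^ (-k₀ / 2) ≤ (A / 4) ^ (-k₀ / 2) :=
          rpow_le_rpow_of_nonpos (by positivity) hw4 (by linarith)
        have h2 : (A / 4) ^ (-k₀ / 2) = cA := by
          have h4 : (4:ℝ) ^ (-k₀ / 2) = ((4:ℝ) ^ (k₀ / 2))⁻¹ := by
            rw [neg_div, rpow_neg (by norm_num : (0:ℝ) ≤ 4)]
          rw [hcA, div_rpow hA0.le (by norm_num : (0:ℝ) ≤ 4), h4]
          field_simp
        linarith
      have hh₁w : h₁ w = cA * ‖v - w‖ ^ γ := by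
        rw [hh₁, hF]
        simp [indicator_of_mem hmem]
      have hh₂0 : 0 ≤ h₂ w := by
        rw [hh₂]; positivity
      calc ‖‖v - w‖ ^ γ * g w‖ ≤ ‖v - w‖ ^ γ * (1 + ‖w‖ ^ 2) ^ (-k₀ / 2) := hb
        _ ≤ ‖v - w‖ ^ γ * cA := mul_le_mul_of_nonneg_left hwb hNγ
        _ = h₁ w := by rw [hh₁w]; ring
        _ ≤ h₁ w + h₂ w := le_add_of_nonneg_right hh₂0
    · have hd : R ≤ ‖v - w‖ := by
        rw [mem_ball_zero_iff] at hmem; linarith [not_lt.1 hmem]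
      have hNle : ‖v - w‖ ^ γ ≤ R ^ γ := rpow_le_rpow_of_nonpos hR hd hγ₂.le
      have hRγ : R ^ γ = (2:ℝ) ^ (-γ) * A ^ (γ/2) := by
        rw [hRdef, div_rpow (by positivity) (by norm_num : (0:ℝ) ≤ 2),
          ← rpow_mul hA0.le, div_eq_mul_inv, ← rpow_neg (by norm_num : (0:ℝ) ≤ 2)]
        ring_nf
      have hh₁0 : h₁ w = 0 := by
        rw [hh₁, hF]; simp [indicator_of_notMem hmem]
      calc ‖‖v - w‖ ^ γ * g w‖ ≤ ‖v - w‖ ^ γ * (1 + ‖w‖ ^ 2) ^ (-k₀ / 2) := hb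
        _ ≤ R ^ γ * (1 + ‖w‖ ^ 2) ^ (-k₀ / 2) :=
            mul_le_mul_of_nonneg_right hNle (rpow_nonneg hw0.le _)
        _ = h₂ w := by rw [hh₂, hRγ]
        _ = h₁ w + h₂ w := by rw [hh₁0]; ring
  -- main bound
  have hmain : |∫ w : E3, ‖v - w‖ ^ γ * g w| ≤ (∫ w : E3, h₁ w) + ∫ w : E3, h₂ w := by
    rw [← Real.norm_eq_abs, ← integral_add hI1 hI2]
    exact norm_integral_le_of_norm_le (hI1.add hI2) hae
  have hint1 : (∫ w : E3, h₁ w) = cA * (3 * κ * (R ^ (3+γ) / (3+γ))) := by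
    calc (∫ w : E3, h₁ w) = ∫ w : E3, F w := integral_sub_left_eq_self F volume v
      _ = ∫ x in ball (0:E3) R, cA * ‖x‖ ^ γ := integral_indicator measurableSet_ball
      _ = cA * ∫ x in ball (0:E3) R, ‖x‖ ^ γ := integral_const_mul _ _
      _ = cA * (3 * κ * (R ^ (3+γ) / (3+γ))) := by rw [aux_integral_eq γ hγ₁ hγ₂ hR]
  have hint2 : (∫ w : E3, h₂ w) = ((2:ℝ) ^ (-γ) * A ^ (γ/2)) * I₂ := integral_const_mul _ _
  have hR3γ : R ^ (3+γ) = A ^ ((1:ℝ)/2 * (3+γ)) * (2:ℝ) ^ (-(3+γ)) := by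
    rw [hRdef, div_rpow (by positivity) (by norm_num : (0:ℝ) ≤ 2),
      ← rpow_mul hA0.le, div_eq_mul_inv, ← rpow_neg (by norm_num : (0:ℝ) ≤ 2)]
  have hApow : A ^ (-k₀/2) * A ^ ((1:ℝ)/2 * (3+γ)) ≤ A ^ (γ/2) := by
    rw [← rpow_add hA0]
    exact rpow_le_rpow_of_exponent_le hA1 (by linarith)
  have hterm1 : cA * (3 * κ * (R ^ (3+γ) / (3+γ))) ≤ C₁ * A ^ (γ/2) := by
    rw [hcA, hR3γ, hC₁]
    have hfac : (0:ℝ) ≤ (4:ℝ) ^ (k₀/2) * ((2:ℝ) ^ (-(3+γ))) * (3 * κ / (3+γ)) := by positivity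
    calc (4:ℝ) ^ (k₀/2) * A ^ (-k₀/2) * (3 * κ * (A ^ ((1:ℝ)/2 * (3+γ)) * (2:ℝ) ^ (-(3+γ)) / (3+γ)))
        = ((4:ℝ) ^ (k₀/2) * (2:ℝ) ^ (-(3+γ)) * (3 * κ / (3+γ)))
            * (A ^ (-k₀/2) * A ^ ((1:ℝ)/2 * (3+γ))) := by ring
      _ ≤ ((4:ℝ) ^ (k₀/2) * (2:ℝ) ^ (-(3+γ)) * (3 * κ / (3+γ))) * A ^ (γ/2) :=
          mul_le_mul_of_nonneg_left hApow hfac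
  have hAγ2 : (0:ℝ) < A ^ (γ/2) := rpow_pos_of_pos hA0 _
  calc |∫ w : E3, ‖v - w‖ ^ γ * g w| ≤ (∫ w : E3, h₁ w) + ∫ w : E3, h₂ w := hmain
    _ = cA * (3 * κ * (R ^ (3+γ) / (3+γ))) + ((2:ℝ) ^ (-γ) * A ^ (γ/2)) * I₂ := by
        rw [hint1, hint2]
    _ ≤ C₁ * A ^ (γ/2) + ((2:ℝ) ^ (-γ) * I₂) * A ^ (γ/2) := by
        refine add_le_add hterm1 (le_of_eq (by ring))
    _ ≤ (C₁ + (2:ℝ) ^ (-γ) * I₂ + 1) * A ^ (γ/2) := by nlinarith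
end
end

section
/- Let u, v, w : ℝ₊ → ℝ₊ be continuous with u ≤ v ≤ w, and suppose there are constants C, σ > 0 and positive functions R ↦ ε_R, ϑ_R with ε_R → 0 and ϑ_R/ε_R → 0 as R → ∞, such that v'(t) + σ u(t) ≤ 0, w(t) ≤ C w(0), and ε_R v(t) ≤ u(t) + ϑ_R w(t) for all t > 0 and R > 0. Then for all t ≥ 0, v(t) ≤ Γ(t) w(0), where Γ(t) = inf_{R>0} ( e^{-σ ε_R t} + C ϑ_R/ε_R ). -/
open MeasureTheory Set

noncomputable section

/-- Weakly dissipative Grönwall variant: if `u ≤ v ≤ w` are continuous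
nonnegative on `ℝ₊`, `v' + σu ≤ 0`, `w ≤ C w(0)` and `ε_R v ≤ u + ϑ_R w` with
`ε_R → 0`, `ϑ_R/ε_R → 0`, then `v(t) ≤ Γ(t) w(0)` with
`Γ(t) = inf_{R>0} (e^{-σ ε_R t} + C ϑ_R/ε_R)`. -/
theorem gronwall_weakly_dissipative
    (u v w v' : ℝ → ℝ) (C σ : ℝ) (hC : 0 < C) (hσ : 0 < σ)
    (hu : ContinuousOn u (Set.Ici 0)) (hv : ContinuousOn v (Set.Ici 0))
    (hw : ContinuousOn w (Set.Ici 0))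
    (hu0 : ∀ t ∈ Set.Ici (0 : ℝ), 0 ≤ u t)
    (huv : ∀ t ∈ Set.Ici (0 : ℝ), u t ≤ v t)
    (hvw : ∀ t ∈ Set.Ici (0 : ℝ), v t ≤ w t)
    (ε ϑ : ℝ → ℝ)
    (hε : ∀ R : ℝ, 0 < R → 0 < ε R) (hϑ : ∀ R : ℝ, 0 < R → 0 < ϑ R)
    (hεlim : Filter.Tendsto ε Filter.atTop (nhds 0))
    (hϑεlim : Filter.Tendsto (fun R => ϑ R / ε R) Filter.atTop (nhds 0))
    (hderiv : ∀ t ∈ Set.Ioi (0 : ℝ), HasDerivAt v (v' t) t)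
    (hdiss : ∀ t ∈ Set.Ioi (0 : ℝ), v' t + σ * u t ≤ 0)
    (hwbd : ∀ t ∈ Set.Ioi (0 : ℝ), w t ≤ C * w 0)
    (hsplit : ∀ t ∈ Set.Ioi (0 : ℝ), ∀ R : ℝ, 0 < R → ε R * v t ≤ u t + ϑ R * w t) :
    ∀ t ∈ Set.Ici (0 : ℝ),
      v t ≤ sInf {y : ℝ | ∃ R : ℝ, 0 < R ∧
        y = Real.exp (-σ * ε R * t) + C * ϑ R / ε R} * w 0 := by
  intro t ht
  have ht0 : (0 : ℝ) ≤ t := ht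
  have hw0 : (0 : ℝ) ≤ w 0 := le_trans (hu0 0 self_mem_Ici) (le_trans (huv 0 self_mem_Ici) (hvw 0 self_mem_Ici))
  -- main per-R bound
  have key : ∀ R : ℝ, 0 < R →
      v t ≤ (Real.exp (-σ * ε R * t) + C * ϑ R / ε R) * w 0 := by
    intro R hR
    have hεR := hε R hR
    have hϑR := hϑ R hR
    set a : ℝ := σ * ε R with ha
    have haP : 0 < a := mul_pos hσ hεR
    set b : ℝ := σ * (ϑ R * (C * w 0)) with hb
    have hbP : 0 ≤ b := by positivity
    have hterm : b / a = C * ϑ R / ε R * w 0 := by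
      rw [hb, ha]; field_simp
    rcases eq_or_lt_of_le ht0 with htz | htpos
    · -- t = 0
      have hvle : v t ≤ w 0 := by rw [← htz]; exact hvw 0 self_mem_Ici
      have : Real.exp (-σ * ε R * t) = 1 := by rw [← htz]; simp
      rw [this]
      have : (0:ℝ) ≤ C * ϑ R / ε R * w 0 := by positivity
      nlinarith
    · -- t > 0 : Gronwall on [s, t] for each s ∈ (0, t], then s → 0⁺
      have hstep : ∀ s ∈ Set.Ioc (0:ℝ) t,
          v t ≤ v s * Real.exp (-a * (t - s)) + b / a := by
        intro s hs
        have hs0 : 0 < s := hs.1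
        have hIcc : Set.Icc s t ⊆ Set.Ici (0:ℝ) := fun x hx => le_trans hs0.le hx.1
        have hIco : ∀ x ∈ Set.Ico s t, x ∈ Set.Ioi (0:ℝ) := fun x hx => lt_of_lt_of_le hs0 hx.1
        have hG := le_gronwallBound_of_liminf_deriv_right_le (f := v) (f' := v')
          (δ := v s) (K := -a) (ε := b) (a := s) (b := t)
          (hv.mono hIcc)
          (by
            intro x hx r hr
            have hd := hderiv x (hIco x hx)
            have := (hasDerivAt_iff_tendsto_slope.mp hd).mono_left
              (nhdsWithin_mono _ (fun z hz => ne_of_gt hz : Set.Ioi x ⊆ {x}ᶜ))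
            have hev : ∀ᶠ z in nhdsWithin x (Set.Ioi x), slope v x z < r :=
              this (Iio_mem_nhds hr)
            refine (hev.mono ?_).frequently
            intro z hz
            simpa [slope_def_field, div_eq_inv_mul] using hz)
          le_rfl
          (by
            intro x hx
            have hxI : x ∈ Set.Ioi (0:ℝ) := hIco x hx
            have h1 := hdiss x hxI
            have h2 := hsplit x hxI R hR
            have h3 := hwbd x hxI
            have : σ * (ε R * v x) ≤ σ * (u x + ϑ R * w x) := by
              apply mul_le_mul_of_nonneg_left _ hσ.le
              linarith [h2]
            have h4 : σ * (ϑ R * w x) ≤ σ * (ϑ R * (C * w 0)) := by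
              apply mul_le_mul_of_nonneg_left _ hσ.le
              exact mul_le_mul_of_nonneg_left h3 hϑR.le
            rw [ha, hb]
            nlinarith)
          t ⟨hs.2, le_rfl⟩
        have hane : (-a : ℝ) ≠ 0 := by linarith
        rw [gronwallBound_of_K_ne_0 hane] at hG
        have hexp : Real.exp (-a * (t - s)) ≤ 1 :=
          Real.exp_le_one_iff.mpr (by nlinarith [sub_nonneg.mpr hs.2])
        have hexp0 : 0 < Real.exp (-a * (t - s)) := Real.exp_pos _
        have : b / -a * (Real.exp (-a * (t - s)) - 1) ≤ b / a := by
          rw [div_neg, neg_mul]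
          have h1 : b / a * (1 - Real.exp (-a * (t - s))) ≤ b / a * 1 := by
            apply mul_le_mul_of_nonneg_left _ (by positivity)
            nlinarith
          nlinarith
        calc v t ≤ v s * Real.exp (-a * (t - s)) + b / -a * (Real.exp (-a * (t - s)) - 1) := hG
          _ ≤ v s * Real.exp (-a * (t - s)) + b / a := by linarith
      -- limit s → 0⁺
      have hcont : Filter.Tendsto (fun s => v s * Real.exp (-a * (t - s)) + b / a)
          (nhdsWithin 0 (Set.Ioi 0)) (nhds (v 0 * Real.exp (-a * t) + b / a)) := by
        have hv0 : Filter.Tendsto v (nhdsWithin 0 (Set.Ioi 0)) (nhds (v 0)) :=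
          ((hv 0 self_mem_Ici).mono_left (nhdsWithin_mono _ Ioi_subset_Ici_self))
        have hexp : Filter.Tendsto (fun s : ℝ => Real.exp (-a * (t - s)))
            (nhdsWithin 0 (Set.Ioi 0)) (nhds (Real.exp (-a * t))) := by
          have : Continuous (fun s : ℝ => Real.exp (-a * (t - s))) := by continuity
          simpa using (this.tendsto 0).mono_left nhdsWithin_le_nhds
        exact (hv0.mul hexp).add tendsto_const_nhds
      have hev : ∀ᶠ s in nhdsWithin 0 (Set.Ioi 0),
          v t ≤ v s * Real.exp (-a * (t - s)) + b / a :=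
        Filter.eventually_of_mem (Ioc_mem_nhdsGT_of_mem ⟨le_rfl, htpos⟩) hstep
      have hlim : v t ≤ v 0 * Real.exp (-a * t) + b / a :=
        ge_of_tendsto hcont hev
      have hv0w : v 0 ≤ w 0 := hvw 0 self_mem_Ici
      have : v 0 * Real.exp (-a * t) ≤ w 0 * Real.exp (-a * t) :=
        mul_le_mul_of_nonneg_right hv0w (Real.exp_pos _).le
      rw [hterm] at hlim
      have : v t ≤ w 0 * Real.exp (-a * t) + C * ϑ R / ε R * w 0 := by linarith
      calc v t ≤ w 0 * Real.exp (-a * t) + C * ϑ R / ε R * w 0 := this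
        _ = (Real.exp (-σ * ε R * t) + C * ϑ R / ε R) * w 0 := by rw [ha]; ring
  -- assemble via sInf
  set S : Set ℝ := {y : ℝ | ∃ R : ℝ, 0 < R ∧
      y = Real.exp (-σ * ε R * t) + C * ϑ R / ε R} with hS
  have hSne : S.Nonempty := ⟨_, 1, one_pos, rfl⟩
  rcases eq_or_lt_of_le hw0 with hw0z | hw0pos
  · -- w 0 = 0
    have hvt0 : v t ≤ 0 := by
      rcases eq_or_lt_of_le ht0 with htz | htpos
      · rw [← htz]; linarith [hvw 0 Set.self_mem_Ici]
      · have := hwbd t htpos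
        have := hvw t ht
        nlinarith
    have : sInf S * w 0 = 0 := by rw [← hw0z]; ring
    linarith
  · have hdiv : v t / w 0 ≤ sInf S := by
      apply le_csInf hSne
      intro y hy
      obtain ⟨R, hR, rfl⟩ := hy
      rw [div_le_iff₀ hw0pos]
      exact key R hR
    calc v t = v t / w 0 * w 0 := by field_simp
      _ ≤ sInf S * w 0 := mul_le_mul_of_nonneg_right hdiv hw0
end
end

section
/- Let Ω ⊂ ℝ³ be a bounded open set with smooth boundary, δ(x) = dist(x, ∂Ω), and let n_x denote the unit outward normal extended smoothly near ∂Ω. There is a constant C such that for every f ∈ H¹_v with appropriate decay, ∫_{Ω×ℝ³} f² ⟨v⟩^{-2} δ^{-1/8} dx dv ≤ C ( ∫_{Ω×ℝ³} f² ⟨v⟩^{-2} (n_x·v)²/δ^{1/2} dx dv + ∫_{Ω×ℝ³} |∇_v f|² dx dv ). -/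
open MeasureTheory Set

noncomputable section

open ENNReal
open scoped Classical

abbrev E3 : Type := EuclideanSpace ℝ (Fin 3)

lemma sq_lintegral_le {α : Type*} [MeasurableSpace α] (μ : Measure α) (h : α → ℝ≥0∞)
    (hh : AEMeasurable h μ) :
    (∫⁻ a, h a ∂μ) ^ 2 ≤ μ univ * ∫⁻ a, (h a) ^ 2 ∂μ := by
  have hpq : Real.HolderConjugate 2 2 := by constructor <;> norm_num
  have H := ENNReal.lintegral_mul_le_Lp_mul_Lq μ hpq hh aemeasurable_const (g := fun _ => 1)
  simp only [Pi.mul_apply, mul_one, one_mul, ENNReal.one_rpow, lintegral_const, lintegral_one] at H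
  calc (∫⁻ a, h a ∂μ) ^ 2
      ≤ ((∫⁻ a, h a ^ (2:ℝ) ∂μ) ^ (1/(2:ℝ)) * (μ univ) ^ (1/(2:ℝ))) ^ 2 :=
        pow_le_pow_left' H 2
    _ = μ univ * ∫⁻ a, h a ^ (2:ℝ) ∂μ := by
        rw [mul_pow, ← ENNReal.rpow_natCast (_ ^ (1/(2:ℝ))), ← ENNReal.rpow_natCast ((μ univ) ^ (1/(2:ℝ))),
          ← ENNReal.rpow_mul, ← ENNReal.rpow_mul]
        norm_num [mul_comm]
    _ = μ univ * ∫⁻ a, (h a) ^ 2 ∂μ := by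
        congr 1; apply lintegral_congr; intro a
        rw [← ENNReal.rpow_natCast (h a) 2]; norm_num

lemma line_sq_diff (g : E3 → ℝ) (hg : Differentiable ℝ g) (v e : E3) (he : ‖e‖ = 1)
    {L τ : ℝ} (hL : 0 < L) (hτ0 : 0 ≤ τ) (hτL : τ ≤ L) :
    ENNReal.ofReal ((g (v + τ • e) - g v) ^ 2) ≤
      ENNReal.ofReal L * ∫⁻ u in Ioc 0 L, ENNReal.ofReal (‖fderiv ℝ g (v + u • e)‖ ^ 2) := by
  set J := ∫⁻ u in Ioc 0 L, ENNReal.ofReal (‖fderiv ℝ g (v + u • e)‖ ^ 2) with hJdef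
  by_cases hJ : J = ∞
  · rw [hJ, ENNReal.mul_top (ENNReal.ofReal_pos.mpr hL).ne']
    exact le_top
  -- the directional derivative along the line
  set φ' : ℝ → ℝ := fun u => fderiv ℝ g (v + u • e) (e) with hφ'def
  have hline : ∀ u : ℝ, Measurable fun u : ℝ => v + u • e := fun u => by fun_prop
  have hφ'meas : Measurable φ' :=
    (measurable_fderiv_apply_const ℝ g e).comp (hline 0)
  have hbound : ∀ u, |φ' u| ≤ ‖fderiv ℝ g (v + u • e)‖ := by
    intro u
    calc |φ' u| = ‖fderiv ℝ g (v + u • e) e‖ := (Real.norm_eq_abs _).symm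
      _ ≤ ‖fderiv ℝ g (v + u • e)‖ * ‖e‖ := ContinuousLinearMap.le_opNorm _ _
      _ = ‖fderiv ℝ g (v + u • e)‖ := by rw [he, mul_one]
  have hderiv : ∀ u : ℝ, HasDerivAt (fun t : ℝ => g (v + t • e)) (φ' u) u := by
    intro u
    have h1 : HasDerivAt (fun t : ℝ => v + t • e) e u := by
      simpa using ((hasDerivAt_id u).smul_const e).const_add v
    exact (hg (v + u • e)).hasFDerivAt.comp_hasDerivAt u h1
  -- |φ'| lintegral bound
  have habs_le : ∀ u, ENNReal.ofReal (|φ' u|) ≤ 1 + ENNReal.ofReal (‖fderiv ℝ g (v + u • e)‖ ^ 2) := by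
    intro u
    rcases le_total (|φ' u|) 1 with h | h
    · calc ENNReal.ofReal (|φ' u|) ≤ ENNReal.ofReal 1 := ENNReal.ofReal_le_ofReal h
        _ = 1 := ENNReal.ofReal_one
        _ ≤ _ := le_self_add
    · calc ENNReal.ofReal (|φ' u|) ≤ ENNReal.ofReal (‖fderiv ℝ g (v + u • e)‖ ^ 2) := by
            apply ENNReal.ofReal_le_ofReal
            nlinarith [hbound u, abs_nonneg (φ' u), sq_abs (φ' u), norm_nonneg (fderiv ℝ g (v + u • e))]
        _ ≤ _ := le_add_self
  -- integrability of φ' on Ioc 0 L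
  have hInt : IntegrableOn φ' (Ioc 0 L) volume := by
    refine ⟨(hφ'meas.aestronglyMeasurable).restrict, ?_⟩
    rw [hasFiniteIntegral_iff_norm]
    calc ∫⁻ u in Ioc 0 L, ENNReal.ofReal ‖φ' u‖
        ≤ ∫⁻ u in Ioc 0 L, (1 + ENNReal.ofReal (‖fderiv ℝ g (v + u • e)‖ ^ 2)) := by
          refine lintegral_mono fun u => ?_
          simpa [Real.norm_eq_abs] using habs_le u
      _ = volume (Ioc 0 L) + J := by
          rw [lintegral_add_left measurable_const]
          rw [lintegral_const, Measure.restrict_apply_univ, one_mul]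
      _ < ∞ := by
          refine ENNReal.add_lt_top.mpr ⟨?_, lt_top_iff_ne_top.mpr hJ⟩
          simp [Real.volume_Ioc]
  have hInt' : IntervalIntegrable φ' volume 0 τ := by
    rw [intervalIntegrable_iff, uIoc_of_le hτ0]
    exact hInt.mono_set (Ioc_subset_Ioc le_rfl hτL)
  have hFTC : ∫ u in (0:ℝ)..τ, φ' u = g (v + τ • e) - g v := by
    have := intervalIntegral.integral_eq_sub_of_hasDerivAt
      (f := fun t : ℝ => g (v + t • e)) (f' := φ') (fun u _ => hderiv u) hInt'
    simpa using this
  -- now estimate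
  have key : ENNReal.ofReal ((g (v + τ • e) - g v) ^ 2)
      = (ENNReal.ofReal |g (v + τ • e) - g v|) ^ 2 := by
    rw [← ENNReal.ofReal_pow (abs_nonneg _), sq_abs]
  rw [key, ← hFTC]
  have habs : ENNReal.ofReal |∫ u in (0:ℝ)..τ, φ' u| ≤ ∫⁻ u in Ioc 0 L, ENNReal.ofReal |φ' u| := by
    calc ENNReal.ofReal |∫ u in (0:ℝ)..τ, φ' u|
        ≤ ENNReal.ofReal (∫ u in (0:ℝ)..τ, |φ' u|) := by
          apply ENNReal.ofReal_le_ofReal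
          exact intervalIntegral.abs_integral_le_integral_abs hτ0
      _ = ∫⁻ u in Ioc 0 τ, ENNReal.ofReal |φ' u| := by
          rw [intervalIntegral.integral_of_le hτ0,
            ofReal_integral_eq_lintegral_ofReal
              (hInt.mono_set (Ioc_subset_Ioc le_rfl hτL)).abs
              (Filter.Eventually.of_forall fun u => abs_nonneg _)]
      _ ≤ ∫⁻ u in Ioc 0 L, ENNReal.ofReal |φ' u| :=
          lintegral_mono_set (Ioc_subset_Ioc le_rfl hτL)
  calc (ENNReal.ofReal |∫ u in (0:ℝ)..τ, φ' u|) ^ 2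
      ≤ (∫⁻ u in Ioc 0 L, ENNReal.ofReal |φ' u|) ^ 2 := pow_le_pow_left' habs 2
    _ ≤ (volume.restrict (Ioc 0 L)) univ * ∫⁻ u in Ioc 0 L, (ENNReal.ofReal |φ' u|) ^ 2 :=
        sq_lintegral_le _ _ ((ENNReal.measurable_ofReal.comp hφ'meas.abs).aemeasurable)
    _ ≤ ENNReal.ofReal L * J := by
        apply mul_le_mul'
        · rw [Measure.restrict_apply_univ]
          simp [Real.volume_Ioc]
        · refine lintegral_mono fun u => ?_
          rw [← ENNReal.ofReal_pow (abs_nonneg _), sq_abs]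
          apply ENNReal.ofReal_le_ofReal
          nlinarith [hbound u, abs_nonneg (φ' u), sq_abs (φ' u), norm_nonneg (fderiv ℝ g (v + u • e))]

set_option maxHeartbeats 2000000 in
lemma strip_bound (g : E3 → ℝ) (hgm : Measurable g) (hg : Differentiable ℝ g)
    (e : E3) (he : ‖e‖ = 1) {ε M : ℝ} (hε : 0 < ε) (hεM : ε ≤ M) :
    ∫⁻ v, ENNReal.ofReal (g v ^ 2 * (1 + ‖v‖ ^ 2)⁻¹) ≤
      ENNReal.ofReal ((1 + 2 * (1 + 3 * M) ^ 2) / ε ^ 2) *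
        (∫⁻ v, ENNReal.ofReal (g v ^ 2 * (1 + ‖v‖ ^ 2)⁻¹ * ((inner ℝ e v : ℝ)) ^ 2))
      + ENNReal.ofReal (18 * ε ^ 2) * ∫⁻ v, ENNReal.ofReal (‖fderiv ℝ g v‖ ^ 2) := by
  have hM : 0 < M := lt_of_lt_of_le hε hεM
  set K : ℝ := 1 + 3 * M with hK
  have hK1 : 1 ≤ K := by nlinarith
  set Q : E3 → ℝ := fun v => g v ^ 2 * (1 + ‖v‖ ^ 2)⁻¹ with hQ
  set R : E3 → ℝ := fun v => g v ^ 2 * (1 + ‖v‖ ^ 2)⁻¹ * ((inner ℝ e v : ℝ)) ^ 2 with hR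
  set Dq : E3 → ℝ := fun v => ‖fderiv ℝ g v‖ ^ 2 with hDq
  have hQnn : ∀ v, 0 ≤ Q v := fun v => by positivity
  have hQmeas : Measurable fun v => ENNReal.ofReal (Q v) := by
    apply ENNReal.measurable_ofReal.comp
    exact ((hgm.pow_const 2).mul ((measurable_norm.pow_const 2).const_add 1).inv)
  have hinner : Measurable fun v : E3 => (inner ℝ e v : ℝ) :=
    (innerSL ℝ e).continuous.measurable
  have hRmeas : Measurable fun v => ENNReal.ofReal (R v) := by
    apply ENNReal.measurable_ofReal.comp
    exact ((hgm.pow_const 2).mul ((measurable_norm.pow_const 2).const_add 1).inv).mul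
      (hinner.pow_const 2)
  have hDmeas : Measurable fun v => ENNReal.ofReal (Dq v) := by
    apply ENNReal.measurable_ofReal.comp
    exact (measurable_fderiv ℝ g).norm.pow_const 2
  set S : Set E3 := {v | ((inner ℝ e v : ℝ)) ^ 2 ≤ ε ^ 2} with hS
  have hSmeas : MeasurableSet S := measurableSet_le (hinner.pow_const 2) measurable_const
  -- weight comparison
  have hwt : ∀ (v : E3) (τ : ℝ), 0 ≤ τ → τ ≤ 3 * M →
      (1 + ‖v‖ ^ 2)⁻¹ ≤ K ^ 2 * (1 + ‖v + τ • e‖ ^ 2)⁻¹ := by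
    intro v τ hτ0 hτ3
    have h1 : ‖v + τ • e‖ ≤ ‖v‖ + 3 * M := by
      calc ‖v + τ • e‖ ≤ ‖v‖ + ‖τ • e‖ := norm_add_le _ _
        _ = ‖v‖ + τ := by rw [norm_smul, he, mul_one, Real.norm_eq_abs, abs_of_nonneg hτ0]
        _ ≤ ‖v‖ + 3 * M := by linarith
    have h2 : (0:ℝ) < 1 + ‖v‖ ^ 2 := by positivity
    have h3 : (0:ℝ) < 1 + ‖v + τ • e‖ ^ 2 := by positivity
    have ha : (0:ℝ) < (1 + ‖v‖ ^ 2)⁻¹ := inv_pos.mpr h2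
    have hb : (0:ℝ) < (1 + ‖v + τ • e‖ ^ 2)⁻¹ := inv_pos.mpr h3
    have key : 1 + ‖v + τ • e‖ ^ 2 ≤ K ^ 2 * (1 + ‖v‖ ^ 2) := by
      have hsq : ‖v + τ • e‖ ^ 2 ≤ (‖v‖ + 3 * M) ^ 2 := by
        apply sq_le_sq' _ h1
        nlinarith [norm_nonneg (v + τ • e), norm_nonneg v, hM.le]
      rw [hK]
      nlinarith [norm_nonneg v, hM.le, sq_nonneg ‖v‖, sq_nonneg (‖v‖ - 1),
        mul_nonneg hM.le (sq_nonneg ‖v‖), mul_nonneg hM.le hM.le]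
    have step := mul_le_mul_of_nonneg_right (mul_le_mul_of_nonneg_right key hb.le) ha.le
    have lhs_eq : (1 + ‖v + τ • e‖ ^ 2) * (1 + ‖v + τ • e‖ ^ 2)⁻¹ * (1 + ‖v‖ ^ 2)⁻¹
        = (1 + ‖v‖ ^ 2)⁻¹ := by
      rw [mul_inv_cancel₀ h3.ne', one_mul]
    have rhs_eq : K ^ 2 * (1 + ‖v‖ ^ 2) * (1 + ‖v + τ • e‖ ^ 2)⁻¹ * (1 + ‖v‖ ^ 2)⁻¹
        = K ^ 2 * (1 + ‖v + τ • e‖ ^ 2)⁻¹ := by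
      have : K ^ 2 * (1 + ‖v‖ ^ 2) * (1 + ‖v + τ • e‖ ^ 2)⁻¹ * (1 + ‖v‖ ^ 2)⁻¹
          = K ^ 2 * (1 + ‖v + τ • e‖ ^ 2)⁻¹ * ((1 + ‖v‖ ^ 2) * (1 + ‖v‖ ^ 2)⁻¹) := by ring
      rw [this, mul_inv_cancel₀ h2.ne', mul_one]
    rw [← lhs_eq, ← rhs_eq]
    exact step
  -- directional derivative integrals
  set Jv : E3 → ℝ≥0∞ := fun v => ∫⁻ u in Ioc 0 (3*ε), ENNReal.ofReal (Dq (v + u • e)) with hJv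
  set κ : ℝ := 2 * K ^ 2 / ε ^ 2 with hκdef
  have hκ0 : 0 ≤ κ := by positivity
  have hκε : κ * ε ^ 2 = 2 * K ^ 2 := by rw [hκdef]; field_simp
  -- pointwise bound for v in the strip, τ in (2ε, 3ε]
  have hstep : ∀ v ∈ S, ∀ τ ∈ Ioc (2*ε) (3*ε),
      ENNReal.ofReal (Q v) ≤ ENNReal.ofReal κ * ENNReal.ofReal (R (v + τ • e))
        + ENNReal.ofReal 2 * (ENNReal.ofReal (3*ε) * Jv v) := by
    intro v hv τ hτ
    have hτ0 : (0:ℝ) ≤ τ := le_trans (by positivity) hτ.1.le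
    have hτ3 : τ ≤ 3 * ε := hτ.2
    have hτ3M : τ ≤ 3 * M := le_trans hτ3 (by linarith)
    set a : ℝ := g v with ha
    set b : ℝ := g (v + τ • e) with hb
    set A : ℝ := (1 + ‖v‖ ^ 2)⁻¹ with hA
    set B : ℝ := (1 + ‖v + τ • e‖ ^ 2)⁻¹ with hB
    have hApos : (0:ℝ) < A := by rw [hA]; positivity
    have hBpos : (0:ℝ) < B := by rw [hB]; positivity
    have hA1 : A ≤ 1 := by
      rw [hA]
      have h1 : (1:ℝ) ≤ 1 + ‖v‖ ^ 2 := le_add_of_nonneg_right (sq_nonneg _)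
      calc (1 + ‖v‖ ^ 2)⁻¹ ≤ 1⁻¹ := by
            apply inv_anti₀ one_pos h1
        _ = 1 := inv_one
    set c : ℝ := (inner ℝ e (v + τ • e) : ℝ) with hc
    have hcval : c = (inner ℝ e v : ℝ) + τ := by
      rw [hc, inner_add_right, real_inner_smul_right, real_inner_self_eq_norm_sq, he]
      ring
    have hvS : ((inner ℝ e v : ℝ)) ^ 2 ≤ ε ^ 2 := hv
    have hlow : ε ≤ c := by
      rw [hcval]
      nlinarith [hτ.1, hε]
    have hc2 : ε ^ 2 ≤ c ^ 2 := by nlinarith [hε]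
    -- real inequality
    have hreal : Q v ≤ κ * R (v + τ • e) + 2 * (b - a) ^ 2 := by
      have p1 : a ^ 2 * A ≤ 2 * b ^ 2 * A + 2 * (b - a) ^ 2 * A := by
        nlinarith [sq_nonneg (2 * b - a), hApos.le]
      have p2 : 2 * b ^ 2 * A ≤ 2 * b ^ 2 * (K ^ 2 * B) := by
        apply mul_le_mul_of_nonneg_left (hwt v τ hτ0 hτ3M) (by positivity)
      have p3 : κ * (ε ^ 2 * (b ^ 2 * B)) ≤ κ * (c ^ 2 * (b ^ 2 * B)) := by
        apply mul_le_mul_of_nonneg_left _ hκ0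
        apply mul_le_mul_of_nonneg_right hc2 (by positivity)
      have p4 : 2 * (b - a) ^ 2 * A ≤ 2 * (b - a) ^ 2 := by
        nlinarith [sq_nonneg (b - a), hA1, hApos.le]
      have p5 : κ * (ε ^ 2 * (b ^ 2 * B)) = 2 * b ^ 2 * (K ^ 2 * B) := by
        rw [hκdef]; field_simp
      have hQv : Q v = a ^ 2 * A := by simp only [hQ, ha, hA]
      have hRw : R (v + τ • e) = b ^ 2 * B * c ^ 2 := by simp only [hR, hb, hB, hc]
      rw [hQv, hRw]
      nlinarith [p1, p2, p3, p4, p5]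
    calc ENNReal.ofReal (Q v) ≤ ENNReal.ofReal (κ * R (v + τ • e) + 2 * (b - a) ^ 2) :=
          ENNReal.ofReal_le_ofReal hreal
      _ ≤ ENNReal.ofReal (κ * R (v + τ • e)) + ENNReal.ofReal (2 * (b - a) ^ 2) :=
          ENNReal.ofReal_add_le
      _ ≤ ENNReal.ofReal κ * ENNReal.ofReal (R (v + τ • e))
            + ENNReal.ofReal 2 * (ENNReal.ofReal (3*ε) * Jv v) := by
          apply add_le_add
          · rw [ENNReal.ofReal_mul hκ0]
          · rw [ENNReal.ofReal_mul (by norm_num : (0:ℝ) ≤ 2)]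
            apply mul_le_mul_of_nonneg_left _ (zero_le)
            exact line_sq_diff g hg v e he (by positivity) hτ0 hτ3
  -- measurability of shifted integrands
  have hshift : ∀ (F : E3 → ℝ≥0∞), Measurable F →
      Measurable (Function.uncurry fun (v : E3) (τ : ℝ) => F (v + τ • e)) := by
    intro F hF
    exact hF.comp ((measurable_fst.add (measurable_snd.smul_const e)))
  set T : E3 → ℝ≥0∞ := fun v => ∫⁻ τ in Ioc (2*ε) (3*ε), ENNReal.ofReal (R (v + τ • e))
    with hT
  have hTmeas : Measurable T :=
    Measurable.lintegral_prod_right (hshift _ hRmeas)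
  have hJmeas : Measurable Jv :=
    Measurable.lintegral_prod_right (hshift _ hDmeas)
  have hvolI : volume (Ioc (2*ε) (3*ε)) = ENNReal.ofReal ε := by
    rw [Real.volume_Ioc]; ring_nf
  have hvolI3 : volume (Ioc (0:ℝ) (3*ε)) = ENNReal.ofReal (3*ε) := by
    rw [Real.volume_Ioc]; ring_nf
  set c3 : ℝ≥0∞ := ENNReal.ofReal 2 * ENNReal.ofReal (3*ε) * ENNReal.ofReal ε with hc3
  -- integrate the pointwise bound in τ
  have hτint : ∀ v ∈ S,
      ENNReal.ofReal (Q v) * ENNReal.ofReal ε ≤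
        ENNReal.ofReal κ * T v + c3 * Jv v := by
    intro v hv
    have hmeasτ : Measurable fun τ : ℝ =>
        ENNReal.ofReal κ * ENNReal.ofReal (R (v + τ • e))
          + ENNReal.ofReal 2 * (ENNReal.ofReal (3*ε) * Jv v) := by
      apply Measurable.fun_add _ measurable_const
      have h1 : Measurable fun τ : ℝ => ENNReal.ofReal (R (v + τ • e)) :=
        hRmeas.comp ((measurable_id.smul_const e).const_add v)
      exact h1.const_mul _
    calc ENNReal.ofReal (Q v) * ENNReal.ofReal ε
        = ∫⁻ _τ in Ioc (2*ε) (3*ε), ENNReal.ofReal (Q v) := by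
          rw [setLIntegral_const, hvolI]
      _ ≤ ∫⁻ τ in Ioc (2*ε) (3*ε),
            (ENNReal.ofReal κ * ENNReal.ofReal (R (v + τ • e))
              + ENNReal.ofReal 2 * (ENNReal.ofReal (3*ε) * Jv v)) := by
          apply setLIntegral_mono hmeasτ
          intro τ hτ
          exact hstep v hv τ hτ
      _ = ENNReal.ofReal κ * T v
            + (ENNReal.ofReal 2 * (ENNReal.ofReal (3*ε) * Jv v)) * ENNReal.ofReal ε := by
          have h1 : Measurable fun τ : ℝ => ENNReal.ofReal (R (v + τ • e)) :=
            hRmeas.comp ((measurable_id.smul_const e).const_add v)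
          rw [lintegral_add_right _ measurable_const, setLIntegral_const, hvolI,
            lintegral_const_mul _ h1]
      _ = ENNReal.ofReal κ * T v + c3 * Jv v := by
          rw [hc3]; ring
  -- integrate in v over the strip
  have hTint : ∫⁻ v, T v = (∫⁻ v, ENNReal.ofReal (R v)) * ENNReal.ofReal ε := by
    rw [hT, lintegral_lintegral_swap (hshift _ hRmeas).aemeasurable]
    have : ∀ τ : ℝ, ∫⁻ v, ENNReal.ofReal (R (v + τ • e)) = ∫⁻ v, ENNReal.ofReal (R v) :=
      fun τ => lintegral_add_right_eq_self (fun w => ENNReal.ofReal (R w)) (τ • e)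
    simp_rw [this]
    rw [setLIntegral_const, hvolI]
  have hJint : ∫⁻ v, Jv v = (∫⁻ v, ENNReal.ofReal (Dq v)) * ENNReal.ofReal (3*ε) := by
    rw [hJv, lintegral_lintegral_swap (hshift _ hDmeas).aemeasurable]
    have : ∀ u : ℝ, ∫⁻ v, ENNReal.ofReal (Dq (v + u • e)) = ∫⁻ v, ENNReal.ofReal (Dq v) :=
      fun u => lintegral_add_right_eq_self (fun w => ENNReal.ofReal (Dq w)) (u • e)
    simp_rw [this]
    rw [setLIntegral_const, hvolI3]
  have hc3' : c3 * ((∫⁻ v, ENNReal.ofReal (Dq v)) * ENNReal.ofReal (3*ε))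
      = (ENNReal.ofReal (18 * ε^2) * ∫⁻ v, ENNReal.ofReal (Dq v)) * ENNReal.ofReal ε := by
    have e18 : ENNReal.ofReal (18 * ε^2)
        = ENNReal.ofReal 2 * ENNReal.ofReal (3*ε) * ENNReal.ofReal (3*ε) := by
      rw [← ENNReal.ofReal_mul (by norm_num : (0:ℝ) ≤ 2),
        ← ENNReal.ofReal_mul (by positivity : (0:ℝ) ≤ 2 * (3*ε))]
      congr 1
      ring
    rw [hc3, e18]
    ring
  have hStrip : ∫⁻ v in S, ENNReal.ofReal (Q v) ≤
      ENNReal.ofReal κ * (∫⁻ v, ENNReal.ofReal (R v))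
        + ENNReal.ofReal (18 * ε^2) * (∫⁻ v, ENNReal.ofReal (Dq v)) := by
    have hεne : ENNReal.ofReal ε ≠ 0 := (ENNReal.ofReal_pos.mpr hε).ne'
    have hεtop : ENNReal.ofReal ε ≠ ∞ := ENNReal.ofReal_ne_top
    rw [← ENNReal.mul_le_mul_iff_left hεne hεtop]
    calc (∫⁻ v in S, ENNReal.ofReal (Q v)) * ENNReal.ofReal ε
        = ∫⁻ v in S, ENNReal.ofReal (Q v) * ENNReal.ofReal ε := by
          rw [lintegral_mul_const _ (hQmeas.mono (le_refl _) le_rfl)]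
      _ ≤ ∫⁻ v in S, (ENNReal.ofReal κ * T v + c3 * Jv v) := by
          apply setLIntegral_mono ((hTmeas.const_mul _).add (hJmeas.const_mul _))
          exact hτint
      _ ≤ ∫⁻ v, (ENNReal.ofReal κ * T v + c3 * Jv v) :=
          setLIntegral_le_lintegral _ _
      _ = ENNReal.ofReal κ * (∫⁻ v, T v) + c3 * (∫⁻ v, Jv v) := by
          rw [lintegral_add_left (hTmeas.const_mul _), lintegral_const_mul _ hTmeas,
            lintegral_const_mul _ hJmeas]
      _ = (ENNReal.ofReal κ * (∫⁻ v, ENNReal.ofReal (R v))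
            + ENNReal.ofReal (18 * ε^2) * (∫⁻ v, ENNReal.ofReal (Dq v))) * ENNReal.ofReal ε := by
          rw [hTint, hJint, hc3']; ring
  -- off-strip bound
  have hOff : ∫⁻ v in Sᶜ, ENNReal.ofReal (Q v) ≤
      ENNReal.ofReal (1 / ε^2) * (∫⁻ v, ENNReal.ofReal (R v)) := by
    calc ∫⁻ v in Sᶜ, ENNReal.ofReal (Q v)
        ≤ ∫⁻ v in Sᶜ, ENNReal.ofReal (1 / ε^2) * ENNReal.ofReal (R v) := by
          apply setLIntegral_mono (hRmeas.const_mul _)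
          intro v hv
          rw [← ENNReal.ofReal_mul (by positivity : (0:ℝ) ≤ 1 / ε^2)]
          apply ENNReal.ofReal_le_ofReal
          have hv' : ε ^ 2 < ((inner ℝ e v : ℝ)) ^ 2 := not_le.mp hv
          have : Q v * ε ^ 2 ≤ Q v * ((inner ℝ e v : ℝ)) ^ 2 :=
            mul_le_mul_of_nonneg_left hv'.le (hQnn v)
          have hRv : R v = Q v * ((inner ℝ e v : ℝ)) ^ 2 := by simp only [hR, hQ]
          rw [hRv]
          rw [div_mul_eq_mul_div, le_div_iff₀ (by positivity : (0:ℝ) < ε^2)]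
          linarith
      _ ≤ ∫⁻ v, ENNReal.ofReal (1 / ε^2) * ENNReal.ofReal (R v) :=
          setLIntegral_le_lintegral _ _
      _ = ENNReal.ofReal (1 / ε^2) * ∫⁻ v, ENNReal.ofReal (R v) :=
          lintegral_const_mul _ hRmeas
  -- combine
  have hsplit : ∫⁻ v, ENNReal.ofReal (Q v)
      = (∫⁻ v in S, ENNReal.ofReal (Q v)) + ∫⁻ v in Sᶜ, ENNReal.ofReal (Q v) :=
    (lintegral_add_compl _ hSmeas).symm
  have hcoef : ENNReal.ofReal κ + ENNReal.ofReal (1 / ε^2)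
      = ENNReal.ofReal ((1 + 2 * (1 + 3 * M) ^ 2) / ε ^ 2) := by
    rw [← ENNReal.ofReal_add hκ0 (by positivity)]
    congr 1
    rw [hκdef, hK]
    field_simp
    ring
  calc ∫⁻ v, ENNReal.ofReal (Q v)
      = (∫⁻ v in S, ENNReal.ofReal (Q v)) + ∫⁻ v in Sᶜ, ENNReal.ofReal (Q v) := hsplit
    _ ≤ (ENNReal.ofReal κ * (∫⁻ v, ENNReal.ofReal (R v))
          + ENNReal.ofReal (18 * ε^2) * (∫⁻ v, ENNReal.ofReal (Dq v)))
        + ENNReal.ofReal (1 / ε^2) * (∫⁻ v, ENNReal.ofReal (R v)) := add_le_add hStrip hOff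
    _ = (ENNReal.ofReal κ + ENNReal.ofReal (1 / ε^2)) * (∫⁻ v, ENNReal.ofReal (R v))
          + ENNReal.ofReal (18 * ε^2) * (∫⁻ v, ENNReal.ofReal (Dq v)) := by ring
    _ = ENNReal.ofReal ((1 + 2 * (1 + 3 * M) ^ 2) / ε ^ 2) * (∫⁻ v, ENNReal.ofReal (R v))
          + ENNReal.ofReal (18 * ε^2) * (∫⁻ v, ENNReal.ofReal (Dq v)) := by rw [hcoef]

lemma clm_norm_sq (L : E3 →L[ℝ] ℝ) :
    ‖L‖ ^ 2 = ∑ i : Fin 3, (L (EuclideanSpace.single i (1:ℝ))) ^ 2 := by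
  set y : E3 := (InnerProductSpace.toDual ℝ E3).symm L with hy
  have hLx : ∀ x : E3, L x = (inner ℝ y x : ℝ) := fun x =>
    (InnerProductSpace.toDual_symm_apply).symm
  have hnorm : ‖L‖ = ‖y‖ := ((InnerProductSpace.toDual ℝ E3).symm.norm_map L).symm
  have happ : ∀ i : Fin 3, L (EuclideanSpace.single i (1:ℝ)) = y i := by
    intro i
    rw [hLx, EuclideanSpace.inner_single_right]
    simp
  have hnsq : ‖y‖ ^ 2 = ∑ i : Fin 3, (y i) ^ 2 := by
    rw [EuclideanSpace.norm_eq]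
    rw [Real.sq_sqrt (by positivity)]
    congr 1; ext i; rw [Real.norm_eq_abs, sq_abs]
  rw [hnorm, hnsq]
  congr 1; ext i; rw [happ]


lemma measurable_G (Ω : Set E3) (hΩo : IsOpen Ω) (f : E3 → E3 → ℝ)
    (hfm : Measurable fun q : E3 × E3 => f q.1 q.2)
    (hdiff : ∀ x ∈ Ω, Differentiable ℝ (f x)) (i : Fin 3) :
    Measurable fun p : E3 × E3 =>
      if p.1 ∈ Ω then fderiv ℝ (f p.1) p.2 (EuclideanSpace.single i (1:ℝ)) else 0 := by
  classical
  set b : E3 := EuclideanSpace.single i (1:ℝ) with hb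
  set Fk : ℕ → E3 × E3 → ℝ := fun k p =>
    if p.1 ∈ Ω then (f p.1 (p.2 + ((k:ℝ)+1)⁻¹ • b) - f p.1 p.2) * ((k:ℝ)+1) else 0 with hFk
  have hcond : MeasurableSet {p : E3 × E3 | p.1 ∈ Ω} :=
    measurable_fst hΩo.measurableSet
  have hFkm : ∀ k, Measurable (Fk k) := by
    intro k
    have h1 : Measurable fun p : E3 × E3 => f p.1 (p.2 + ((k:ℝ)+1)⁻¹ • b) :=
      hfm.comp (measurable_fst.prodMk (measurable_snd.add_const _))
    exact Measurable.ite hcond ((h1.sub hfm).mul_const _) measurable_const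
  apply measurable_of_tendsto_metrizable hFkm
  rw [tendsto_pi_nhds]
  intro p
  by_cases hp : p.1 ∈ Ω
  · simp only [hFk, hp, if_true]
    -- derivative along the line at 0
    have hline : HasDerivAt (fun t : ℝ => p.2 + t • b) b 0 := by
      simpa using ((hasDerivAt_id (0:ℝ)).smul_const b).const_add p.2
    have hd : HasDerivAt (fun t : ℝ => f p.1 (p.2 + t • b))
        (fderiv ℝ (f p.1) p.2 b) 0 := by
      have h0 : p.2 + (0:ℝ) • b = p.2 := by simp
      have := ((hdiff p.1 hp (p.2 + (0:ℝ) • b)).hasFDerivAt).comp_hasDerivAt 0 hline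
      rwa [h0] at this
    rw [hasDerivAt_iff_tendsto_slope] at hd
    have hseq : Filter.Tendsto (fun k : ℕ => ((k:ℝ)+1)⁻¹) Filter.atTop (nhdsWithin 0 {0}ᶜ) := by
      apply tendsto_nhdsWithin_of_tendsto_nhds_of_eventually_within
      · simpa [one_div] using tendsto_one_div_add_atTop_nhds_zero_nat (𝕜 := ℝ)
      · apply Filter.Eventually.of_forall
        intro k
        simp only [mem_compl_iff, mem_singleton_iff]
        positivity
    have := hd.comp hseq
    apply this.congr
    intro k
    have hk : ((k:ℝ)+1)⁻¹ ≠ 0 := by positivity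
    rw [Function.comp_apply, slope_def_field]
    rw [sub_zero, div_eq_mul_inv, inv_inv]
    simp
  · simp only [hFk, hp, if_false]
    exact tendsto_const_nhds

set_option maxHeartbeats 1000000 in
/-- Boundary-penalized interpolation inequality: for a bounded open
`Ω ⊂ ℝ³` with unit normal field `n` and `δ(x) = dist(x, ∂Ω)`, there is `C` such that
`∫∫ f²⟨v⟩⁻²δ^{-1/8} ≤ C(∫∫ f²⟨v⟩⁻²(n·v)²δ^{-1/2} + ∫∫ |∇_v f|²)`. -/
theorem boundary_interpolation_inequality
    (Ω : Set (EuclideanSpace ℝ (Fin 3))) (hΩo : IsOpen Ω) (hΩb : Bornology.IsBounded Ω)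
    (n : EuclideanSpace ℝ (Fin 3) → EuclideanSpace ℝ (Fin 3)) (hn : ∀ x, ‖n x‖ = 1) :
    ∃ C : ℝ, 0 < C ∧
      ∀ f : EuclideanSpace ℝ (Fin 3) → EuclideanSpace ℝ (Fin 3) → ℝ,
        Measurable (fun q : EuclideanSpace ℝ (Fin 3) × EuclideanSpace ℝ (Fin 3) =>
          f q.1 q.2) →
        (∀ x ∈ Ω, Differentiable ℝ (f x)) →
        (∫⁻ x in Ω, ∫⁻ v : EuclideanSpace ℝ (Fin 3),
            ENNReal.ofReal ((f x v) ^ 2 * (1 + ‖v‖ ^ 2)⁻¹ *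
              (Metric.infDist x (frontier Ω)) ^ (-(1 : ℝ) / 8)))
          ≤ ENNReal.ofReal C *
            ((∫⁻ x in Ω, ∫⁻ v : EuclideanSpace ℝ (Fin 3),
                ENNReal.ofReal ((f x v) ^ 2 * (1 + ‖v‖ ^ 2)⁻¹ * ((inner ℝ (n x) v : ℝ)) ^ 2 *
                  (Metric.infDist x (frontier Ω)) ^ (-(1 : ℝ) / 2)))
              + ∫⁻ x in Ω, ∫⁻ v : EuclideanSpace ℝ (Fin 3),
                  ENNReal.ofReal (‖fderiv ℝ (f x) v‖ ^ 2)) := by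
  rcases eq_empty_or_nonempty Ω with hem | hne
  · refine ⟨1, one_pos, ?_⟩
    intro f hfm hdiff
    simp [hem]
  obtain ⟨x₀, hx₀⟩ := hne
  have hfr : (frontier Ω).Nonempty := by
    rcases eq_empty_or_nonempty (frontier Ω) with h | h
    · exfalso
      rcases isClopen_iff.mp (isClopen_iff_frontier_eq_empty.mpr h) with h1 | h1
      · rw [h1] at hx₀; exact hx₀
      · rw [h1] at hΩb; exact NormedSpace.unbounded_univ ℝ _ hΩb
    · exact h
  obtain ⟨r, hr⟩ := hΩb.subset_closedBall 0
  set Dm : ℝ := max (2 * r) 1 with hDm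
  have hDm1 : (1:ℝ) ≤ Dm := le_max_right _ _
  have hDm0 : (0:ℝ) < Dm := lt_of_lt_of_le one_pos hDm1
  have hδle : ∀ x ∈ Ω, Metric.infDist x (frontier Ω) ≤ Dm := by
    intro x hx
    obtain ⟨y, hy⟩ := hfr
    have hyb : y ∈ Metric.closedBall 0 r :=
      (closure_minimal hr Metric.isClosed_closedBall) (frontier_subset_closure hy)
    have hxb : x ∈ Metric.closedBall 0 r := hr hx
    calc Metric.infDist x (frontier Ω) ≤ dist x y := Metric.infDist_le_dist_of_mem hy
      _ ≤ dist x 0 + dist 0 y := dist_triangle _ _ _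
      _ ≤ r + r := by
          rw [Metric.mem_closedBall] at hyb hxb
          rw [dist_comm 0 y]
          linarith
      _ ≤ Dm := by rw [hDm]; simp; left; linarith
  set M : ℝ := Dm ^ ((3:ℝ)/16) with hM
  have hM0 : 0 < M := Real.rpow_pos_of_pos hDm0 _
  set cK : ℝ := 1 + 2 * (1 + 3 * M) ^ 2 with hcK
  set C : ℝ := max cK (18 * Dm ^ ((1:ℝ)/4)) with hC
  have hC0 : 0 < C := lt_of_lt_of_le (by positivity) (le_max_left _ _)
  refine ⟨C, hC0, ?_⟩
  intro f hfm hdiff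
  -- the measurable substitute for the x-section Dirichlet energy
  set dq : E3 × E3 → ℝ≥0∞ := fun p => ENNReal.ofReal
    (∑ i : Fin 3, (if p.1 ∈ Ω then fderiv ℝ (f p.1) p.2 (EuclideanSpace.single i (1:ℝ)) else 0) ^ 2)
    with hdq
  have hdqm : Measurable dq := by
    apply ENNReal.measurable_ofReal.comp
    apply Finset.measurable_sum
    intro i _
    exact (measurable_G Ω hΩo f hfm hdiff i).pow_const 2
  set D' : E3 → ℝ≥0∞ := fun x => ∫⁻ v, dq (x, v) with hD'
  have hD'm : Measurable D' :=
    Measurable.lintegral_prod_right (f := fun x v => dq (x, v)) hdqm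
  have hD'eq : ∀ x ∈ Ω, D' x = ∫⁻ v, ENNReal.ofReal (‖fderiv ℝ (f x) v‖ ^ 2) := by
    intro x hx
    apply lintegral_congr
    intro v
    rw [hdq]
    simp only [hx, if_true]
    rw [clm_norm_sq (fderiv ℝ (f x) v)]
  -- pointwise (in x) bound
  have hx_bound : ∀ x ∈ Ω,
      (∫⁻ v, ENNReal.ofReal ((f x v) ^ 2 * (1 + ‖v‖ ^ 2)⁻¹ *
          (Metric.infDist x (frontier Ω)) ^ (-(1 : ℝ) / 8)))
        ≤ ENNReal.ofReal C * (∫⁻ v, ENNReal.ofReal ((f x v) ^ 2 * (1 + ‖v‖ ^ 2)⁻¹ *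
              ((inner ℝ (n x) v : ℝ)) ^ 2 * (Metric.infDist x (frontier Ω)) ^ (-(1 : ℝ) / 2)))
          + ENNReal.ofReal C * D' x := by
    intro x hx
    set δ : ℝ := Metric.infDist x (frontier Ω) with hδ
    have hxnf : x ∉ frontier Ω := by
      rw [hΩo.frontier_eq]
      exact fun hc => hc.2 hx
    have hδpos : 0 < δ := (isClosed_frontier.notMem_iff_infDist_pos hfr).mp hxnf
    have hδD : δ ≤ Dm := hδle x hx
    set ε : ℝ := δ ^ ((3:ℝ)/16) with hε
    have hε0 : 0 < ε := Real.rpow_pos_of_pos hδpos _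
    have hεM : ε ≤ M := Real.rpow_le_rpow hδpos.le hδD (by norm_num)
    have hgm : Measurable (f x) := hfm.comp measurable_prodMk_left
    have key := strip_bound (f x) hgm (hdiff x hx) (n x) (hn x) hε0 hεM
    set w8 : ℝ := δ ^ (-(1:ℝ)/8) with hw8
    set w2 : ℝ := δ ^ (-(1:ℝ)/2) with hw2
    have hw80 : 0 ≤ w8 := (Real.rpow_pos_of_pos hδpos _).le
    have hw20 : 0 ≤ w2 := (Real.rpow_pos_of_pos hδpos _).le
    have hεsq : ε ^ 2 = δ ^ ((3:ℝ)/8) := by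
      rw [hε, ← Real.rpow_natCast (δ ^ ((3:ℝ)/16)) 2, ← Real.rpow_mul hδpos.le]
      norm_num
    -- LHS factorization
    have hLHS : (∫⁻ v, ENNReal.ofReal ((f x v) ^ 2 * (1 + ‖v‖ ^ 2)⁻¹ * w8))
        = ENNReal.ofReal w8 * ∫⁻ v, ENNReal.ofReal ((f x v) ^ 2 * (1 + ‖v‖ ^ 2)⁻¹) := by
      rw [← lintegral_const_mul' _ _ ENNReal.ofReal_ne_top]
      apply lintegral_congr
      intro v
      rw [← ENNReal.ofReal_mul hw80]
      congr 1
      ring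
    have hRHS : (∫⁻ v, ENNReal.ofReal ((f x v) ^ 2 * (1 + ‖v‖ ^ 2)⁻¹ *
          ((inner ℝ (n x) v : ℝ)) ^ 2 * w2))
        = ENNReal.ofReal w2 * ∫⁻ v, ENNReal.ofReal ((f x v) ^ 2 * (1 + ‖v‖ ^ 2)⁻¹ *
            ((inner ℝ (n x) v : ℝ)) ^ 2) := by
      rw [← lintegral_const_mul' _ _ ENNReal.ofReal_ne_top]
      apply lintegral_congr
      intro v
      rw [← ENNReal.ofReal_mul hw20]
      congr 1
      ring
    -- coefficient identities
    have hco1 : ENNReal.ofReal w8 * ENNReal.ofReal (cK / ε ^ 2)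
        = ENNReal.ofReal cK * ENNReal.ofReal w2 := by
      rw [← ENNReal.ofReal_mul hw80, ← ENNReal.ofReal_mul (by positivity : (0:ℝ) ≤ cK)]
      congr 1
      rw [hεsq, hw8, hw2]
      calc δ ^ (-(1:ℝ)/8) * (cK / δ ^ ((3:ℝ)/8))
          = cK * (δ ^ (-(1:ℝ)/8) / δ ^ ((3:ℝ)/8)) := by ring
        _ = cK * δ ^ (-(1:ℝ)/2) := by
            rw [show (-(1:ℝ)/2) = -(1:ℝ)/8 - 3/8 by norm_num, Real.rpow_sub hδpos]
    have hco2 : ENNReal.ofReal w8 * ENNReal.ofReal (18 * ε ^ 2)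
        ≤ ENNReal.ofReal C := by
      rw [← ENNReal.ofReal_mul hw80]
      apply ENNReal.ofReal_le_ofReal
      have h14 : w8 * (18 * ε ^ 2) = 18 * δ ^ ((1:ℝ)/4) := by
        rw [hεsq, hw8]
        calc δ ^ (-(1:ℝ)/8) * (18 * δ ^ ((3:ℝ)/8))
            = 18 * (δ ^ (-(1:ℝ)/8) * δ ^ ((3:ℝ)/8)) := by ring
          _ = 18 * δ ^ ((1:ℝ)/4) := by
              rw [← Real.rpow_add hδpos]
              norm_num
      rw [h14]
      calc 18 * δ ^ ((1:ℝ)/4) ≤ 18 * Dm ^ ((1:ℝ)/4) := by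
            apply mul_le_mul_of_nonneg_left _ (by norm_num)
            exact Real.rpow_le_rpow hδpos.le hδD (by norm_num)
        _ ≤ C := le_max_right _ _
    -- conclude the per-x bound
    rw [hLHS, hRHS]
    calc ENNReal.ofReal w8 * ∫⁻ v, ENNReal.ofReal (f x v ^ 2 * (1 + ‖v‖ ^ 2)⁻¹)
        ≤ ENNReal.ofReal w8 *
            ((ENNReal.ofReal ((1 + 2 * (1 + 3 * M) ^ 2) / ε ^ 2) *
              ∫⁻ v, ENNReal.ofReal (f x v ^ 2 * (1 + ‖v‖ ^ 2)⁻¹ * ((inner ℝ (n x) v : ℝ)) ^ 2))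
            + ENNReal.ofReal (18 * ε ^ 2) *
              ∫⁻ v, ENNReal.ofReal (‖fderiv ℝ (f x) v‖ ^ 2)) := mul_le_mul_right key _
      _ = (ENNReal.ofReal w8 * ENNReal.ofReal (cK / ε ^ 2)) *
              (∫⁻ v, ENNReal.ofReal (f x v ^ 2 * (1 + ‖v‖ ^ 2)⁻¹ * ((inner ℝ (n x) v : ℝ)) ^ 2))
            + (ENNReal.ofReal w8 * ENNReal.ofReal (18 * ε ^ 2)) *
              ∫⁻ v, ENNReal.ofReal (‖fderiv ℝ (f x) v‖ ^ 2) := by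
          rw [hcK]; ring
      _ = (ENNReal.ofReal cK * ENNReal.ofReal w2) *
              (∫⁻ v, ENNReal.ofReal (f x v ^ 2 * (1 + ‖v‖ ^ 2)⁻¹ * ((inner ℝ (n x) v : ℝ)) ^ 2))
            + (ENNReal.ofReal w8 * ENNReal.ofReal (18 * ε ^ 2)) *
              ∫⁻ v, ENNReal.ofReal (‖fderiv ℝ (f x) v‖ ^ 2) := by rw [hco1]
      _ ≤ (ENNReal.ofReal C * ENNReal.ofReal w2) *
              (∫⁻ v, ENNReal.ofReal (f x v ^ 2 * (1 + ‖v‖ ^ 2)⁻¹ * ((inner ℝ (n x) v : ℝ)) ^ 2))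
            + ENNReal.ofReal C *
              ∫⁻ v, ENNReal.ofReal (‖fderiv ℝ (f x) v‖ ^ 2) := by
          apply add_le_add
          · apply mul_le_mul_left
            apply mul_le_mul_left
            exact ENNReal.ofReal_le_ofReal (le_max_left _ _)
          · exact mul_le_mul_left hco2 _
      _ = ENNReal.ofReal C * (ENNReal.ofReal w2 *
              ∫⁻ v, ENNReal.ofReal (f x v ^ 2 * (1 + ‖v‖ ^ 2)⁻¹ * ((inner ℝ (n x) v : ℝ)) ^ 2))
            + ENNReal.ofReal C * D' x := by
          rw [hD'eq x hx, mul_assoc]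
  -- integrate in x
  have hDD : ∫⁻ x in Ω, D' x
      = ∫⁻ x in Ω, ∫⁻ v, ENNReal.ofReal (‖fderiv ℝ (f x) v‖ ^ 2) :=
    setLIntegral_congr_fun hΩo.measurableSet hD'eq
  calc ∫⁻ x in Ω, ∫⁻ v, ENNReal.ofReal ((f x v) ^ 2 * (1 + ‖v‖ ^ 2)⁻¹ *
          (Metric.infDist x (frontier Ω)) ^ (-(1 : ℝ) / 8))
      ≤ ∫⁻ x in Ω, (ENNReal.ofReal C * (∫⁻ v, ENNReal.ofReal ((f x v) ^ 2 * (1 + ‖v‖ ^ 2)⁻¹ *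
            ((inner ℝ (n x) v : ℝ)) ^ 2 * (Metric.infDist x (frontier Ω)) ^ (-(1 : ℝ) / 2)))
          + ENNReal.ofReal C * D' x) := by
        apply lintegral_mono_ae
        rw [ae_restrict_iff' hΩo.measurableSet]
        exact Filter.Eventually.of_forall hx_bound
    _ = (∫⁻ x in Ω, ENNReal.ofReal C * (∫⁻ v, ENNReal.ofReal ((f x v) ^ 2 * (1 + ‖v‖ ^ 2)⁻¹ *
            ((inner ℝ (n x) v : ℝ)) ^ 2 * (Metric.infDist x (frontier Ω)) ^ (-(1 : ℝ) / 2))))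
          + ∫⁻ x in Ω, ENNReal.ofReal C * D' x :=
        lintegral_add_right _ (hD'm.const_mul _)
    _ = ENNReal.ofReal C * (∫⁻ x in Ω, ∫⁻ v, ENNReal.ofReal ((f x v) ^ 2 * (1 + ‖v‖ ^ 2)⁻¹ *
            ((inner ℝ (n x) v : ℝ)) ^ 2 * (Metric.infDist x (frontier Ω)) ^ (-(1 : ℝ) / 2)))
          + ENNReal.ofReal C * ∫⁻ x in Ω, D' x := by
        rw [lintegral_const_mul' _ _ ENNReal.ofReal_ne_top,
          lintegral_const_mul' _ _ ENNReal.ofReal_ne_top]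
    _ = ENNReal.ofReal C * (∫⁻ x in Ω, ∫⁻ v, ENNReal.ofReal ((f x v) ^ 2 * (1 + ‖v‖ ^ 2)⁻¹ *
            ((inner ℝ (n x) v : ℝ)) ^ 2 * (Metric.infDist x (frontier Ω)) ^ (-(1 : ℝ) / 2)))
          + ENNReal.ofReal C * ∫⁻ x in Ω, ∫⁻ v, ENNReal.ofReal (‖fderiv ℝ (f x) v‖ ^ 2) := by
        rw [hDD]
    _ = ENNReal.ofReal C * ((∫⁻ x in Ω, ∫⁻ v, ENNReal.ofReal ((f x v) ^ 2 * (1 + ‖v‖ ^ 2)⁻¹ *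
            ((inner ℝ (n x) v : ℝ)) ^ 2 * (Metric.infDist x (frontier Ω)) ^ (-(1 : ℝ) / 2)))
          + ∫⁻ x in Ω, ∫⁻ v, ENNReal.ofReal (‖fderiv ℝ (f x) v‖ ^ 2)) := by
        rw [mul_add]
end
end
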